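/- SL(2,ℤ) is the amalgamated free product ℤ/4 ∗_{ℤ/2} ℤ/6: the pushout of the two injective group homomorphisms ℤ/2 → ℤ/4 sending 1 ↦ 2 and ℤ/2 → ℤ/6 sending 1 ↦ 3 is isomorphic to SL(2,ℤ), via an isomorphism carrying the image of the generator 1 of ℤ/4 to S and the image of the generator 1 of ℤ/6 to U. -/

import Mathlib

open Matrix

/-- `SL(2,ℤ)`. -/
abbrev SL2Z := Matrix.SpecialLinearGroup (Fin 2) ℤ

/-- The element `S = !![0, -1; 1, 0]` of `SL(2,ℤ)`. -/
def Sgen : SL2Z := ⟨!![0, -1; 1, 0], by norm_num [Matrix.det_fin_two_of]⟩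

/-- The element `U = !![0, -1; 1, 1]` of `SL(2,ℤ)`. -/
def Ugen : SL2Z := ⟨!![0, -1; 1, 1], by norm_num [Matrix.det_fin_two_of]⟩

/-- The homomorphism `ℤ/2 → ℤ/4` sending `1 ↦ 2`. -/
def f24 : ZMod 2 →+ ZMod 4 :=
  ZMod.lift 2 ⟨(Int.castAddHom (ZMod 4)).comp (AddMonoidHom.mulRight 2), by decide⟩

/-- The homomorphism `ℤ/2 → ℤ/6` sending `1 ↦ 3`. -/
def f26 : ZMod 2 →+ ZMod 6 :=
  ZMod.lift 2 ⟨(Int.castAddHom (ZMod 6)).comp (AddMonoidHom.mulRight 3), by decide⟩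

/-- The two vertex groups of the amalgam, `ℤ/4` and `ℤ/6` (written multiplicatively). -/
def Gfam : Bool → Type
  | true => Multiplicative (ZMod 4)
  | false => Multiplicative (ZMod 6)

instance : (b : Bool) → Group (Gfam b)
  | true => inferInstanceAs (Group (Multiplicative (ZMod 4)))
  | false => inferInstanceAs (Group (Multiplicative (ZMod 6)))

/-- The amalgamating homomorphisms `ℤ/2 → ℤ/4` (`1 ↦ 2`) and `ℤ/2 → ℤ/6` (`1 ↦ 3`). -/
def amalg : (b : Bool) → Multiplicative (ZMod 2) →* Gfam b
  | true =>
    show Multiplicative (ZMod 2) →* Multiplicative (ZMod 4) from AddMonoidHom.toMultiplicative f24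
  | false =>
    show Multiplicative (ZMod 2) →* Multiplicative (ZMod 6) from AddMonoidHom.toMultiplicative f26


namespace SL2ZAmalgAux

lemma U2coe : (!![0,-1;1,1] : Matrix (Fin 2) (Fin 2) ℤ) ^ 2 = !![-1,-1;1,0] := by
  ext i j
  fin_cases i <;> fin_cases j <;>
    simp [pow_two, Matrix.mul_apply, Fin.sum_univ_two]

lemma Sgen_coe : (Sgen : Matrix (Fin 2) (Fin 2) ℤ) = !![0, -1; 1, 0] := rfl
lemma Ugen_coe : (Ugen : Matrix (Fin 2) (Fin 2) ℤ) = !![0, -1; 1, 1] := rfl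

/-- action of `SL2Z` on `ℤ × ℤ` -/
def act (g : SL2Z) (v : ℤ × ℤ) : ℤ × ℤ :=
  ((g : Matrix (Fin 2) (Fin 2) ℤ) 0 0 * v.1 + (g : Matrix (Fin 2) (Fin 2) ℤ) 0 1 * v.2,
   (g : Matrix (Fin 2) (Fin 2) ℤ) 1 0 * v.1 + (g : Matrix (Fin 2) (Fin 2) ℤ) 1 1 * v.2)

lemma act_mul (g h : SL2Z) (v : ℤ × ℤ) : act (g * h) v = act g (act h v) := by
  simp only [act, Matrix.SpecialLinearGroup.coe_mul, Matrix.mul_apply, Fin.sum_univ_two,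
    Prod.mk.injEq]
  constructor <;> ring

def IsS (g : SL2Z) : Prop := g = Sgen ∨ g = -Sgen
def IsU (g : SL2Z) : Prop := g = Ugen ∨ g = Ugen ^ 2 ∨ g = -Ugen ∨ g = -(Ugen ^ 2)

lemma act_S {g : SL2Z} (hg : IsS g) (v : ℤ × ℤ) (h1 : v.1 * v.2 < 0) (h2 : v.1 + v.2 ≠ 0) :
    0 < (act g v).1 * (act g v).2 ∧ (act g v).1 ≠ (act g v).2 := by
  obtain ⟨x, y⟩ := v
  rcases hg with rfl | rfl <;>
    · simp only [act, Sgen_coe, Matrix.SpecialLinearGroup.coe_neg] at *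
      norm_num
      refine ⟨by nlinarith, fun h => h2 (by linarith)⟩

lemma act_U {g : SL2Z} (hg : IsU g) (v : ℤ × ℤ) (h1 : 0 < v.1 * v.2) :
    (act g v).1 * (act g v).2 < 0 ∧ (act g v).1 + (act g v).2 ≠ 0 := by
  obtain ⟨x, y⟩ := v
  have hx : x ≠ 0 := by rintro rfl; simp at h1
  have hy : y ≠ 0 := by rintro rfl; simp at h1
  rcases hg with rfl | rfl | rfl | rfl <;>
    · simp only [act, Ugen_coe, Matrix.SpecialLinearGroup.coe_neg,
        Matrix.SpecialLinearGroup.coe_pow, U2coe] at *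
      norm_num
      constructor
      · nlinarith [sq_nonneg x, sq_nonneg y]
      · intro h
        first
          | (apply hx; linarith)
          | (apply hy; linarith)

lemma key : ∀ (L : List (Bool × SL2Z)) (hL : L ≠ [])
    (hall : ∀ p ∈ L, if p.1 then IsS p.2 else IsU p.2)
    (hch : L.Chain' (fun p q => p.1 ≠ q.1)) (v : ℤ × ℤ)
    (hv : if (L.getLast hL).1 then (v.1 * v.2 < 0 ∧ v.1 + v.2 ≠ 0) else 0 < v.1 * v.2),
    (if (L.head hL).1
      then (0 < (act ((L.map Prod.snd).prod) v).1 * (act ((L.map Prod.snd).prod) v).2 ∧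
            (act ((L.map Prod.snd).prod) v).1 ≠ (act ((L.map Prod.snd).prod) v).2)
      else ((act ((L.map Prod.snd).prod) v).1 * (act ((L.map Prod.snd).prod) v).2 < 0 ∧
            (act ((L.map Prod.snd).prod) v).1 + (act ((L.map Prod.snd).prod) v).2 ≠ 0))
  | [], hL, _, _, _, _ => absurd rfl hL
  | [p], _, hall, _, v, hv => by
    have hp := hall p (by simp)
    simp only [List.getLast_singleton] at hv
    simp only [List.head_cons, List.map_cons, List.map_nil, List.prod_cons, List.prod_nil,
      mul_one]
    cases hb : p.1 with
    | true =>
        simp only [hb, if_true] at hv hp ⊢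
        exact act_S hp v hv.1 hv.2
    | false =>
        simp only [hb, Bool.false_eq_true, if_false] at hv hp ⊢
        exact act_U hp v hv
  | p :: q :: rest, _, hall, hch, v, hv => by
    have hpq := (List.isChain_cons_cons.1 hch).1
    have ih := key (q :: rest) (by simp) (fun r hr => hall r (List.mem_cons_of_mem _ hr))
      (List.isChain_cons_cons.1 hch).2 v
      (by rwa [List.getLast_cons (by simp : q :: rest ≠ [])] at hv)
    have hp := hall p (by simp)
    simp only [List.head_cons, List.map_cons, List.prod_cons, act_mul] at ih ⊢
    cases hb : p.1 with
    | true =>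
        simp only [hb, if_true] at hp ⊢
        rw [hb] at hpq
        have hq : q.1 = false := by cases hqb : q.1 <;> simp_all
        simp only [hq, Bool.false_eq_true, if_false] at ih
        exact act_S hp _ ih.1 ih.2
    | false =>
        simp only [hb, Bool.false_eq_true, if_false] at hp ⊢
        rw [hb] at hpq
        have hq : q.1 = true := by cases hqb : q.1 <;> simp_all
        simp only [hq, if_true] at ih
        exact act_U hp _ ih.1

lemma act_one (v : ℤ × ℤ) : act 1 v = v := by
  simp [act, Matrix.SpecialLinearGroup.coe_one, Matrix.one_apply]

lemma act_neg_one (v : ℤ × ℤ) : act (-1) v = (-v.1, -v.2) := by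
  have : ((-1 : SL2Z) : Matrix (Fin 2) (Fin 2) ℤ) = -(1 : Matrix (Fin 2) (Fin 2) ℤ) := by
    simp
  simp [act, this, Matrix.one_apply]

/-- If the word starts with an `S`-type letter, or ends with a `U`-type letter,
its product is not `±1`. -/
lemma prodA (L : List (Bool × SL2Z)) (hL : L ≠ [])
    (hall : ∀ p ∈ L, if p.1 then IsS p.2 else IsU p.2)
    (hch : L.Chain' (fun p q => p.1 ≠ q.1))
    (hcase : (L.head hL).1 = true ∨ (L.getLast hL).1 = false)
    (ε : SL2Z) (hε : ε = 1 ∨ ε = -1) : (L.map Prod.snd).prod ≠ ε := by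
  intro heq
  set v : ℤ × ℤ := if (L.getLast hL).1 then ((2 : ℤ), (-1 : ℤ)) else (1, 1) with hvdef
  have hv : if (L.getLast hL).1 then (v.1 * v.2 < 0 ∧ v.1 + v.2 ≠ 0) else 0 < v.1 * v.2 := by
    cases h : (L.getLast hL).1 <;> simp [hvdef, h] <;> norm_num
  have hkey := key L hL hall hch v hv
  rw [heq] at hkey
  have hw : act ε v = v ∨ act ε v = (-v.1, -v.2) := by
    rcases hε with rfl | rfl
    · exact Or.inl (act_one v)
    · exact Or.inr (act_neg_one v)
  cases hhead : (L.head hL).1 with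
  | true =>
      simp only [hhead, reduceIte] at hkey
      cases hlast : (L.getLast hL).1 with
      | true =>
          simp only [hlast, reduceIte] at hvdef
          rcases hw with h | h <;> rw [h, hvdef] at hkey <;> norm_num at hkey
      | false =>
          simp only [hlast, Bool.false_eq_true, reduceIte] at hvdef
          rcases hw with h | h <;> rw [h, hvdef] at hkey <;> norm_num at hkey
  | false =>
      simp only [hhead, Bool.false_eq_true, reduceIte] at hkey
      have hlast : (L.getLast hL).1 = false := by
        rcases hcase with h | h
        · rw [hhead] at h; exact absurd h (by simp)
        · exact h
      simp only [hlast, Bool.false_eq_true, reduceIte] at hvdef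
      rcases hw with h | h <;> rw [h, hvdef] at hkey <;> norm_num at hkey

lemma Sgen_sq : Sgen ^ 2 = -1 := by
  ext i j
  fin_cases i <;> fin_cases j <;>
    simp [Sgen_coe, pow_two, Matrix.SpecialLinearGroup.coe_mul, Matrix.mul_apply, Fin.sum_univ_two]

lemma Ugen_cube : Ugen ^ 3 = -1 := by
  have h : Ugen ^ 3 = Ugen ^ 2 * Ugen := by group
  apply Subtype.ext
  rw [h, Matrix.SpecialLinearGroup.coe_mul, Matrix.SpecialLinearGroup.coe_pow]
  show (!![0,-1;1,1] : Matrix (Fin 2) (Fin 2) ℤ) ^ 2 * !![0,-1;1,1] = _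
  rw [U2coe]
  ext i j
  fin_cases i <;> fin_cases j <;>
    simp [Ugen, Matrix.mul_apply, Fin.sum_univ_two]

lemma Sgen_inv : Sgen⁻¹ = -Sgen := by
  apply inv_eq_of_mul_eq_one_right
  rw [mul_neg, ← pow_two, Sgen_sq, neg_neg]

lemma IsS_inv {g : SL2Z} (h : IsS g) : IsS g⁻¹ := by
  have hUc := Ugen_cube
  rcases h with rfl | rfl
  · right; rw [Sgen_inv]
  · left; rw [inv_neg, Sgen_inv, neg_neg]

lemma IsU_inv {g : SL2Z} (h : IsU g) : IsU g⁻¹ := by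
  rcases h with rfl | rfl | rfl | rfl
  · right; right; right
    apply inv_eq_of_mul_eq_one_right
    rw [mul_neg, ← pow_succ', Ugen_cube, neg_neg]
  · right; right; left
    apply inv_eq_of_mul_eq_one_right
    rw [mul_neg, ← pow_succ, Ugen_cube, neg_neg]
  · right; left
    apply inv_eq_of_mul_eq_one_right
    rw [neg_mul, ← pow_succ', Ugen_cube, neg_neg]
  · left
    apply inv_eq_of_mul_eq_one_right
    rw [neg_mul, ← pow_succ, Ugen_cube, neg_neg]

lemma neg_one_inv' : (-1 : SL2Z)⁻¹ = -1 := by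
  apply inv_eq_of_mul_eq_one_right
  rw [neg_mul, one_mul, neg_neg]

lemma prod_ne (L : List (Bool × SL2Z)) (hL : L ≠ [])
    (hall : ∀ p ∈ L, if p.1 then IsS p.2 else IsU p.2)
    (hch : L.Chain' (fun p q => p.1 ≠ q.1))
    (ε : SL2Z) (hε : ε = 1 ∨ ε = -1) : (L.map Prod.snd).prod ≠ ε := by
  by_cases hcase : (L.head hL).1 = true ∨ (L.getLast hL).1 = false
  · exact prodA L hL hall hch hcase ε hε
  · push_neg at hcase
    obtain ⟨hh, hl⟩ := hcase
    have hl' : (L.getLast hL).1 = true := by revert hl; cases (L.getLast hL).1 <;> simp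
    intro heq
    have hf : ∀ p : Bool × SL2Z, ((fun p : Bool × SL2Z => (p.1, p.2⁻¹)) p).1 = p.1 :=
      fun _ => rfl
    refine prodA ((L.map fun p => (p.1, p.2⁻¹)).reverse) (by simp [hL]) ?_ ?_ ?_ ε hε ?_
    · intro p hp
      rw [List.mem_reverse, List.mem_map] at hp
      obtain ⟨q, hq, rfl⟩ := hp
      have := hall q hq
      cases hqb : q.1 with
      | true => simp only [hqb, if_true] at this ⊢; exact IsS_inv this
      | false =>
          simp only [hqb, Bool.false_eq_true, if_false] at this ⊢
          exact IsU_inv this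
    · show List.IsChain _ _
      rw [List.isChain_reverse]
      exact (List.isChain_map _).2 (hch.imp fun a b hab => Ne.symm hab)
    · left
      rw [List.head_reverse, List.getLast_map]
      exact hl'
    · rw [List.map_reverse, List.map_map]
      have h1 : (Prod.snd ∘ fun p : Bool × SL2Z => (p.1, p.2⁻¹)) =
          ((fun x : SL2Z => x⁻¹) ∘ Prod.snd) := rfl
      rw [h1, ← List.map_map, ← List.prod_inv_reverse, heq]
      rcases hε with rfl | rfl
      · exact inv_one
      · exact neg_one_inv'

lemma T_mem_aux : Sgen * ModularGroup.T = Ugen := by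
  apply Subtype.ext
  rw [Matrix.SpecialLinearGroup.coe_mul]
  show (!![0,-1;1,0] : Matrix (Fin 2) (Fin 2) ℤ) * !![1,1;0,1] = !![0,-1;1,1]
  rw [Matrix.mul_fin_two]; norm_num

lemma sl2z_gen (A : SL2Z) : A ∈ Subgroup.closure ({Sgen, Ugen} : Set SL2Z) := by
  set H := Subgroup.closure ({Sgen, Ugen} : Set SL2Z) with hH
  have hS : Sgen ∈ H := Subgroup.subset_closure (by simp)
  have hU : Ugen ∈ H := Subgroup.subset_closure (by simp)
  have hT : ModularGroup.T ∈ H := by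
    have : ModularGroup.T = Sgen⁻¹ * Ugen := by
      rw [← T_mem_aux]; group
    rw [this]; exact mul_mem (inv_mem hS) hU
  have hN : (-1 : SL2Z) ∈ H := by
    rw [← Sgen_sq]; exact pow_mem hS 2
  suffices h : ∀ n : ℕ, ∀ A : SL2Z, ((A : Matrix (Fin 2) (Fin 2) ℤ) 1 0).natAbs = n → A ∈ H by
    exact h _ A rfl
  intro n
  induction n using Nat.strong_induction_on with
  | _ n ih =>
    intro A hn
    by_cases hc : (A : Matrix (Fin 2) (Fin 2) ℤ) 1 0 = 0
    · have hdet : (A : Matrix (Fin 2) (Fin 2) ℤ).det = 1 := A.2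
      rw [Matrix.det_fin_two, hc, mul_zero, sub_zero] at hdet
      rcases Int.mul_eq_one_iff_eq_one_or_neg_one.1 hdet with ⟨ha, hd⟩ | ⟨ha, hd⟩
      · have : A = ModularGroup.T ^ ((A : Matrix (Fin 2) (Fin 2) ℤ) 0 1) := by
          apply Subtype.ext
          rw [ModularGroup.coe_T_zpow]
          ext i j
          fin_cases i <;> fin_cases j <;> simp [ha, hd, hc]
        rw [this]; exact zpow_mem hT _
      · have : A = (-1) * ModularGroup.T ^ (-((A : Matrix (Fin 2) (Fin 2) ℤ) 0 1)) := by
          apply Subtype.ext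
          rw [Matrix.SpecialLinearGroup.coe_mul, ModularGroup.coe_T_zpow,
            Matrix.SpecialLinearGroup.coe_neg, Matrix.SpecialLinearGroup.coe_one]
          ext i j
          fin_cases i <;> fin_cases j <;>
            simp [Matrix.mul_apply, Fin.sum_univ_two, Matrix.one_apply, ha, hd, hc]
        rw [this]; exact mul_mem hN (zpow_mem hT _)
    · set a : ℤ := (A : Matrix (Fin 2) (Fin 2) ℤ) 0 0 with hadef
      set c : ℤ := (A : Matrix (Fin 2) (Fin 2) ℤ) 1 0 with hcdef
      set q : ℤ := a / c with hqdef
      set B : SL2Z := Sgen * (ModularGroup.T ^ (-q) * A) with hBdef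
      have hB10 : (B : Matrix (Fin 2) (Fin 2) ℤ) 1 0 = a % c := by
        rw [hBdef, Matrix.SpecialLinearGroup.coe_mul, Matrix.SpecialLinearGroup.coe_mul,
          ModularGroup.coe_T_zpow]
        show ((!![0,-1;1,0] : Matrix (Fin 2) (Fin 2) ℤ) *
          (!![1,-q;0,1] * (A : Matrix (Fin 2) (Fin 2) ℤ))) 1 0 = a % c
        rw [Matrix.eta_fin_two (A : Matrix (Fin 2) (Fin 2) ℤ), Matrix.mul_fin_two,
          Matrix.mul_fin_two]
        rw [Int.emod_def, hqdef, hadef, hcdef]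
        simp
        ring
      have hlt : (a % c).natAbs < n := by
        have habs : a % c < |c| := by
          rcases lt_or_gt_of_ne hc with h | h
          · have h1 : a % c = a % (-c) := by rw [← Int.emod_neg]
            rw [h1, abs_of_neg h]
            exact Int.emod_lt_of_pos a (by linarith)
          · rw [abs_of_pos h]
            exact Int.emod_lt_of_pos a h
        rw [← hn, ← Int.natAbs_abs c]
        exact Int.natAbs_lt_natAbs_of_nonneg_of_lt (Int.emod_nonneg a hc) habs
      have hBmem : B ∈ H := ih _ hlt B (by rw [hB10])
      have : A = ModularGroup.T ^ q * (Sgen⁻¹ * B) := by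
        rw [hBdef]; group
      rw [this]
      exact mul_mem (zpow_mem hT q) (mul_mem (inv_mem hS) hBmem)

lemma Sgen_pow4 : Sgen ^ 4 = 1 := by
  have h : Sgen ^ 4 = (Sgen ^ 2) ^ 2 := by group
  rw [h, Sgen_sq, neg_one_sq]

lemma Ugen_pow6 : Ugen ^ 6 = 1 := by
  have h : Ugen ^ 6 = (Ugen ^ 3) ^ 2 := by group
  rw [h, Ugen_cube, neg_one_sq]

lemma neg_one_pow2 : ((-1 : SL2Z)) ^ 2 = 1 := neg_one_sq

lemma Sgen_cube : Sgen ^ 3 = -Sgen := by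
  have h : Sgen ^ 3 = Sgen ^ 2 * Sgen := by group
  rw [h, Sgen_sq, neg_one_mul]

lemma Ugen_pow4 : Ugen ^ 4 = -Ugen := by
  have h : Ugen ^ 4 = Ugen ^ 3 * Ugen := by group
  rw [h, Ugen_cube, neg_one_mul]

lemma Ugen_pow5 : Ugen ^ 5 = -(Ugen ^ 2) := by
  have h : Ugen ^ 5 = Ugen ^ 3 * Ugen ^ 2 := by group
  rw [h, Ugen_cube, neg_one_mul]

lemma neg_one_ne_one : (-1 : SL2Z) ≠ 1 := by
  intro h
  have h2 := congrArg (fun m : SL2Z => (m : Matrix (Fin 2) (Fin 2) ℤ) 0 0) h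
  simp only [Matrix.SpecialLinearGroup.coe_neg, Matrix.SpecialLinearGroup.coe_one,
    Matrix.neg_apply, Matrix.one_apply_eq] at h2
  norm_num at h2

/-- hom from `Multiplicative (ZMod n)` sending the generator to `g`, given `g ^ n = 1`. -/
def pgen {G : Type*} [Group G] (n : ℕ) [NeZero n] (g : G) (h : g ^ n = 1) :
    Multiplicative (ZMod n) →* G where
  toFun x := g ^ (Multiplicative.toAdd x).val
  map_one' := by simp
  map_mul' x y := by
    show g ^ (Multiplicative.toAdd x + Multiplicative.toAdd y).val = _
    rw [ZMod.val_add, ← pow_eq_pow_mod _ h, pow_add]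

def Ffam : ∀ b, Gfam b →* SL2Z
  | true => pgen 4 Sgen Sgen_pow4
  | false => pgen 6 Ugen Ugen_pow6

def kbase : Multiplicative (ZMod 2) →* SL2Z := pgen 2 (-1) neg_one_pow2

lemma pgen_apply {G : Type*} [Group G] (n : ℕ) [NeZero n] (g : G) (h : g ^ n = 1) (x : ZMod n) :
    pgen n g h (Multiplicative.ofAdd x) = g ^ x.val := rfl

lemma f24_one : f24 (1 : ZMod 2) = 2 := by
  have h : (1 : ZMod 2) = ((1 : ℤ) : ZMod 2) := by norm_num
  rw [h, f24, ZMod.lift_coe]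
  show ((1 * 2 : ℤ) : ZMod 4) = 2
  norm_num

lemma f26_one : f26 (1 : ZMod 2) = 3 := by
  have h : (1 : ZMod 2) = ((1 : ℤ) : ZMod 2) := by norm_num
  rw [h, f26, ZMod.lift_coe]
  show ((1 * 3 : ℤ) : ZMod 6) = 3
  norm_num

lemma amalg_true_apply (x : ZMod 2) :
    amalg true (Multiplicative.ofAdd x) = Multiplicative.ofAdd (f24 x) := rfl

lemma amalg_false_apply (x : ZMod 2) :
    amalg false (Multiplicative.ofAdd x) = Multiplicative.ofAdd (f26 x) := rfl

lemma zmod2_cases : ∀ x : ZMod 2, x = 0 ∨ x = 1 := by decide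

lemma mult_cases2 (x : Multiplicative (ZMod 2)) :
    x = Multiplicative.ofAdd (0 : ZMod 2) ∨ x = Multiplicative.ofAdd (1 : ZMod 2) := by
  rcases zmod2_cases (Multiplicative.toAdd x) with h | h
  · left; rw [← h]; rfl
  · right; rw [← h]; rfl

lemma amalg_inj : ∀ b, Function.Injective (amalg b) := by
  intro b x y hxy
  rcases mult_cases2 x with rfl | rfl <;> rcases mult_cases2 y with rfl | rfl <;> try rfl
  · exfalso
    cases b
    · rw [amalg_false_apply, amalg_false_apply, map_zero, f26_one] at hxy
      have := Multiplicative.ofAdd.injective hxy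
      exact absurd this (by decide)
    · rw [amalg_true_apply, amalg_true_apply, map_zero, f24_one] at hxy
      have := Multiplicative.ofAdd.injective hxy
      exact absurd this (by decide)
  · exfalso
    cases b
    · rw [amalg_false_apply, amalg_false_apply, map_zero, f26_one] at hxy
      have := Multiplicative.ofAdd.injective hxy
      exact absurd this (by decide)
    · rw [amalg_true_apply, amalg_true_apply, map_zero, f24_one] at hxy
      have := Multiplicative.ofAdd.injective hxy
      exact absurd this (by decide)

lemma hcomp : ∀ b, (Ffam b).comp (amalg b) = kbase := by
  intro b
  apply MonoidHom.ext
  intro x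
  rcases mult_cases2 x with rfl | rfl
  · have h0 : Multiplicative.ofAdd (0 : ZMod 2) = 1 := rfl
    rw [h0, _root_.map_one, _root_.map_one]
  · cases b
    · rw [MonoidHom.comp_apply, amalg_false_apply, f26_one]
      show pgen 6 Ugen Ugen_pow6 (Multiplicative.ofAdd (3 : ZMod 6)) = _
      rw [pgen_apply, kbase, pgen_apply]
      have hv : (3 : ZMod 6).val = 3 := rfl
      have hv2 : (1 : ZMod 2).val = 1 := rfl
      rw [hv, hv2, Ugen_cube, pow_one]
    · rw [MonoidHom.comp_apply, amalg_true_apply, f24_one]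
      show pgen 4 Sgen Sgen_pow4 (Multiplicative.ofAdd (2 : ZMod 4)) = _
      rw [pgen_apply, kbase, pgen_apply]
      have hv : (2 : ZMod 4).val = 2 := rfl
      have hv2 : (1 : ZMod 2).val = 1 := rfl
      rw [hv, hv2, Sgen_sq, pow_one]

/-- the lifted homomorphism from the pushout to `SL(2,ℤ)` -/
noncomputable def psi : Monoid.PushoutI amalg →* SL2Z :=
  Monoid.PushoutI.lift Ffam kbase hcomp

lemma psi_of_true : psi (Monoid.PushoutI.of (φ := amalg) true
    (Multiplicative.ofAdd (1 : ZMod 4))) = Sgen := by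
  rw [psi]; refine (Monoid.PushoutI.lift_of Ffam kbase hcomp _).trans ?_
  show pgen 4 Sgen Sgen_pow4 (Multiplicative.ofAdd (1 : ZMod 4)) = Sgen
  rw [pgen_apply]
  have hv : (1 : ZMod 4).val = 1 := rfl
  rw [hv, pow_one]

lemma psi_of_false : psi (Monoid.PushoutI.of (φ := amalg) false
    (Multiplicative.ofAdd (1 : ZMod 6))) = Ugen := by
  rw [psi]; refine (Monoid.PushoutI.lift_of Ffam kbase hcomp _).trans ?_
  show pgen 6 Ugen Ugen_pow6 (Multiplicative.ofAdd (1 : ZMod 6)) = Ugen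
  rw [pgen_apply]
  have hv : (1 : ZMod 6).val = 1 := rfl
  rw [hv, pow_one]

lemma psi_surj : Function.Surjective psi := by
  intro y
  have hy := sl2z_gen y
  have hle : Subgroup.closure ({Sgen, Ugen} : Set SL2Z) ≤ psi.range := by
    rw [Subgroup.closure_le]
    rintro z (rfl | rfl)
    · exact ⟨_, psi_of_true⟩
    · exact ⟨_, psi_of_false⟩
  exact hle hy

instance gfamDecEq : ∀ b, DecidableEq (Gfam b)
  | true => inferInstanceAs (DecidableEq (Multiplicative (ZMod 4)))
  | false => inferInstanceAs (DecidableEq (Multiplicative (ZMod 6)))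

open Monoid.PushoutI Monoid.PushoutI.NormalWord Monoid.CoprodI

lemma mem_set_not_range {b : Bool} (d : Transversal amalg) {g : Gfam b}
    (hset : g ∈ d.set b) (hne : g ≠ 1) : g ∉ MonoidHom.range (amalg b) := by
  intro hr
  have hinj := (d.compl b).1
  have hpair := hinj (a₁ := (⟨⟨g, hr⟩, ⟨1, d.one_mem b⟩⟩ :
      (MonoidHom.range (amalg b) : Set (Gfam b)) × d.set b))
    (a₂ := ⟨⟨1, Subgroup.one_mem _⟩, ⟨g, hset⟩⟩) (by simp)
  apply hne
  have := congrArg (fun p : (MonoidHom.range (amalg b) : Set (Gfam b)) × d.set b =>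
    (p.2 : Gfam b)) hpair
  simpa using this.symm

lemma zmod4_cases : ∀ x : ZMod 4, x = 0 ∨ x = 1 ∨ x = 2 ∨ x = 3 := by decide

lemma zmod6_cases : ∀ x : ZMod 6, x = 0 ∨ x = 1 ∨ x = 2 ∨ x = 3 ∨ x = 4 ∨ x = 5 := by decide

lemma Ffam_true_apply (z : ZMod 4) : Ffam true (Multiplicative.ofAdd z) = Sgen ^ z.val := rfl

lemma Ffam_false_apply (z : ZMod 6) : Ffam false (Multiplicative.ofAdd z) = Ugen ^ z.val := rfl

lemma kbase_zero : kbase (Multiplicative.ofAdd (0 : ZMod 2)) = 1 := rfl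

lemma kbase_one : kbase (Multiplicative.ofAdd (1 : ZMod 2)) = -1 := by
  rw [kbase, pgen_apply]
  have hv : (1 : ZMod 2).val = 1 := rfl
  rw [hv, pow_one]

lemma psi_inj : Function.Injective psi := by
  rw [injective_iff_map_eq_one]
  intro g hg
  classical
  obtain ⟨d⟩ := transversal_nonempty amalg amalg_inj
  set w : NormalWord d := g • NormalWord.empty with hw
  have hgw : g = w.prod := by
    rw [hw, prod_smul, prod_empty, mul_one]
  have hpd : w.prod = Monoid.PushoutI.base amalg w.head * ofCoprodI w.toWord.prod := rfl
  have hwp : w.toWord.prod = (w.toList.map fun l => Monoid.CoprodI.of l.snd).prod := rfl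
  have hsplit : psi w.prod =
      kbase w.head * (w.toList.map (fun l => Ffam l.1 l.2)).prod := by
    have e1 : psi (Monoid.PushoutI.base amalg w.head) = kbase w.head :=
      Monoid.PushoutI.lift_base Ffam kbase hcomp w.head
    have e2 : psi (ofCoprodI w.toWord.prod) =
        (w.toList.map (fun l => Ffam l.1 l.2)).prod := by
      rw [hwp]
      rw [show psi (ofCoprodI (w.toList.map fun l => Monoid.CoprodI.of l.snd).prod) =
        (psi.comp ofCoprodI) (w.toList.map fun l => Monoid.CoprodI.of l.snd).prod from rfl]
      rw [map_list_prod, List.map_map]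
      congr 1
    rw [hpd, _root_.map_mul, e1, e2]
  rw [hgw, hsplit] at hg
  by_cases hnil : w.toList = []
  · rcases mult_cases2 w.head with hh | hh
    · have h1 : w.toWord.prod = 1 := by rw [hwp, hnil]; simp
      have h2 : w.head = 1 := by rw [hh]; rfl
      rw [hgw, hpd, h1, h2, _root_.map_one, _root_.map_one, mul_one]
    · exfalso
      rw [hnil, hh, kbase_one] at hg
      simp only [List.map_nil, List.prod_nil, mul_one] at hg
      exact neg_one_ne_one hg
  · exfalso
    set L : List (Bool × SL2Z) := w.toList.map (fun l => (l.1, Ffam l.1 l.2)) with hL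
    have hLmap : L.map Prod.snd = w.toList.map (fun l => Ffam l.1 l.2) := by
      rw [hL, List.map_map]; rfl
    have hLne : L ≠ [] := by simp [hL, hnil]
    have hall : ∀ p ∈ L, if p.1 then IsS p.2 else IsU p.2 := by
      intro p hp
      rw [hL, List.mem_map] at hp
      obtain ⟨⟨b, x⟩, hl, rfl⟩ := hp
      have hx1 : x ≠ 1 := w.ne_one ⟨b, x⟩ hl
      have hxset := w.normalized b x hl
      have hxnr : x ∉ MonoidHom.range (amalg b) := mem_set_not_range d hxset hx1
      cases b with
      | true =>
          simp only [if_true]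
          obtain ⟨z, rfl⟩ : ∃ z : ZMod 4, (Multiplicative.ofAdd z : Gfam true) = x :=
            ⟨Multiplicative.toAdd x, rfl⟩
          rcases zmod4_cases z with rfl | rfl | rfl | rfl
          · exact absurd rfl hx1
          · left
            rw [Ffam_true_apply]
            have hv : (1 : ZMod 4).val = 1 := rfl
            rw [hv, pow_one]
          · exact absurd ⟨Multiplicative.ofAdd (1 : ZMod 2),
              by rw [amalg_true_apply, f24_one]; rfl⟩ hxnr
          · right
            rw [Ffam_true_apply]
            have hv : (3 : ZMod 4).val = 3 := rfl
            rw [hv, Sgen_cube]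
      | false =>
          simp only [Bool.false_eq_true, if_false]
          obtain ⟨z, rfl⟩ : ∃ z : ZMod 6, (Multiplicative.ofAdd z : Gfam false) = x :=
            ⟨Multiplicative.toAdd x, rfl⟩
          rcases zmod6_cases z with rfl | rfl | rfl | rfl | rfl | rfl
          · exact absurd rfl hx1
          · left
            rw [Ffam_false_apply]
            have hv : (1 : ZMod 6).val = 1 := rfl
            rw [hv, pow_one]
          · right; left
            rw [Ffam_false_apply]
            have hv : (2 : ZMod 6).val = 2 := rfl
            rw [hv]
          · exact absurd ⟨Multiplicative.ofAdd (1 : ZMod 2),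
              by rw [amalg_false_apply, f26_one]; rfl⟩ hxnr
          · right; right; left
            rw [Ffam_false_apply]
            have hv : (4 : ZMod 6).val = 4 := rfl
            rw [hv, Ugen_pow4]
          · right; right; right
            rw [Ffam_false_apply]
            have hv : (5 : ZMod 6).val = 5 := rfl
            rw [hv, Ugen_pow5]
    have hch : L.Chain' (fun p q => p.1 ≠ q.1) := by
      rw [hL]
      exact (List.isChain_map _).2 (w.chain_ne.imp fun a b h => h)
    have hP : (L.map Prod.snd).prod = (kbase w.head)⁻¹ := by
      rw [hLmap]
      exact (inv_eq_of_mul_eq_one_right hg).symm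
    have hε : (kbase w.head)⁻¹ = 1 ∨ (kbase w.head)⁻¹ = -1 := by
      rcases mult_cases2 w.head with hh | hh
      · left; rw [hh, kbase_zero, inv_one]
      · right; rw [hh, kbase_one, neg_one_inv']
    exact prod_ne L hLne hall hch _ hε hP

end SL2ZAmalgAux
/-- `SL(2,ℤ) ≅ ℤ/4 ∗_{ℤ/2} ℤ/6`: the amalgamating maps are injective and send `1 ↦ 2`
and `1 ↦ 3` respectively, and the pushout of the two maps is isomorphic to `SL(2,ℤ)` via
an isomorphism carrying the image of the generator of `ℤ/4` to `S` and the image of the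
generator of `ℤ/6` to `U`. -/
theorem SL2Z_amalgam :
    Function.Injective (amalg true) ∧
    Function.Injective (amalg false) ∧
    amalg true (Multiplicative.ofAdd (1 : ZMod 2)) = Multiplicative.ofAdd (2 : ZMod 4) ∧
    amalg false (Multiplicative.ofAdd (1 : ZMod 2)) = Multiplicative.ofAdd (3 : ZMod 6) ∧
    ∃ e : Monoid.PushoutI amalg ≃* SL2Z,
      e (Monoid.PushoutI.of (φ := amalg) true (Multiplicative.ofAdd (1 : ZMod 4))) = Sgen ∧
      e (Monoid.PushoutI.of (φ := amalg) false (Multiplicative.ofAdd (1 : ZMod 6))) = Ugen := by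
  refine ⟨SL2ZAmalgAux.amalg_inj true, SL2ZAmalgAux.amalg_inj false, ?_, ?_, ?_⟩
  · rw [SL2ZAmalgAux.amalg_true_apply, SL2ZAmalgAux.f24_one]
  · rw [SL2ZAmalgAux.amalg_false_apply, SL2ZAmalgAux.f26_one]
  · exact ⟨MulEquiv.ofBijective SL2ZAmalgAux.psi
      ⟨SL2ZAmalgAux.psi_inj, SL2ZAmalgAux.psi_surj⟩,
      SL2ZAmalgAux.psi_of_true, SL2ZAmalgAux.psi_of_false⟩
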